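/- Let P1 and P2 be n×n skew-symmetric matrix pencils, and let Q1 and Q2 be the (n+1)×(n+1) skew-symmetric matrix pencils congruent to P1 ⊕ M_0 and P2 ⊕ M_0, respectively, where M_0 is the 1×1 zero pencil. Then orbᶜ(P1) covers orbᶜ(P2) if and only if orbᶜ(Q1) covers orbᶜ(Q2). -/
import Mathlib


/-!
Basic framework: a complex `m × n` matrix pencil `A - λ B` is formalized as the
pair `(A, B)` of matrices.  We define strict equivalence, congruence,
skew-symmetry, orbits, direct sums, and the cover relations for the orbit
closure hierarchies (in the Euclidean topology).
-/

open Matrix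

noncomputable section

/-- An `m × n` complex matrix pencil `A - λ B`, formalized as the pair `(A, B)`. -/
abbrev Pencil (m n : ℕ) : Type :=
  Matrix (Fin m) (Fin n) ℂ × Matrix (Fin m) (Fin n) ℂ

namespace Pencil

/-- Strict equivalence of matrix pencils: `Q⁻¹ * A * R = C` and `Q⁻¹ * B * R = D`
for some invertible `Q`, `R`. -/
def StrictEquiv {m n : ℕ} (P Q : Pencil m n) : Prop :=
  ∃ (S : Matrix (Fin m) (Fin m) ℂ) (R : Matrix (Fin n) (Fin n) ℂ),
    IsUnit S ∧ IsUnit R ∧ S⁻¹ * P.1 * R = Q.1 ∧ S⁻¹ * P.2 * R = Q.2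

/-- The strict-equivalence orbit of a pencil. -/
def orbE {m n : ℕ} (P : Pencil m n) : Set (Pencil m n) :=
  {Q | StrictEquiv P Q}

/-- A pencil `A - λ B` is skew-symmetric if `Aᵀ = -A` and `Bᵀ = -B`. -/
def IsSkew {n : ℕ} (P : Pencil n n) : Prop :=
  P.1ᵀ = -P.1 ∧ P.2ᵀ = -P.2

/-- Congruence of (square) matrix pencils: `Sᵀ * A * S = C` and `Sᵀ * B * S = D`
for some invertible `S`. -/
def Congruent {n : ℕ} (P Q : Pencil n n) : Prop :=
  ∃ S : Matrix (Fin n) (Fin n) ℂ,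
    IsUnit S ∧ Sᵀ * P.1 * S = Q.1 ∧ Sᵀ * P.2 * S = Q.2

/-- The congruence orbit of a pencil. -/
def orbC {n : ℕ} (P : Pencil n n) : Set (Pencil n n) :=
  {Q | Congruent P Q}

/-- Direct (block-diagonal) sum of two pencils. -/
def dsum {m n p q : ℕ} (P : Pencil m n) (Q : Pencil p q) : Pencil (m + p) (n + q) :=
  ((fromBlocks P.1 0 0 Q.1).submatrix finSumFinEquiv.symm finSumFinEquiv.symm,
   (fromBlocks P.2 0 0 Q.2).submatrix finSumFinEquiv.symm finSumFinEquiv.symm)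

/-- Transport a pencil along equalities of its dimensions. -/
def cast {m n m' n' : ℕ} (hm : m = m') (hn : n = n') (P : Pencil m n) : Pencil m' n' :=
  (P.1.submatrix (finCongr hm.symm) (finCongr hn.symm),
   P.2.submatrix (finCongr hm.symm) (finCongr hn.symm))

/-- `orbE P1` covers `orbE P2` in the closure hierarchy of strict-equivalence
orbits: `P1` is not strictly equivalent to `P2`, `orbE P2 ⊆ closure (orbE P1)`,
and there is no intermediate orbit strictly between them. -/
def CoversE {m n : ℕ} (P1 P2 : Pencil m n) : Prop :=
  ¬ StrictEquiv P1 P2 ∧ orbE P2 ⊆ closure (orbE P1) ∧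
    ¬ ∃ P : Pencil m n, ¬ StrictEquiv P P1 ∧ ¬ StrictEquiv P P2 ∧
        orbE P ⊆ closure (orbE P1) ∧ orbE P2 ⊆ closure (orbE P)

/-- `orbC P1` covers `orbC P2` in the closure hierarchy of congruence orbits of
skew-symmetric pencils: `P1` is not congruent to `P2`,
`orbC P2 ⊆ closure (orbC P1)`, and there is no congruence orbit of a
skew-symmetric pencil strictly between them. -/
def CoversC {n : ℕ} (P1 P2 : Pencil n n) : Prop :=
  ¬ Congruent P1 P2 ∧ orbC P2 ⊆ closure (orbC P1) ∧
    ¬ ∃ P : Pencil n n, IsSkew P ∧ ¬ Congruent P P1 ∧ ¬ Congruent P P2 ∧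
        orbC P ⊆ closure (orbC P1) ∧ orbC P2 ⊆ closure (orbC P)

end Pencil

/-! Canonical building blocks. -/

/-- The `k × k` Jordan block `J_k(μ)`. -/
def Jmat (k : ℕ) (μ : ℂ) : Matrix (Fin k) (Fin k) ℂ :=
  Matrix.of fun i j => if (j : ℕ) = (i : ℕ) then μ else if (j : ℕ) = (i : ℕ) + 1 then 1 else 0

/-- The `k × (k+1)` matrix `F_k` with ones on the superdiagonal. -/
def Fmat (k : ℕ) : Matrix (Fin k) (Fin (k + 1)) ℂ :=
  Matrix.of fun i j => if (j : ℕ) = (i : ℕ) + 1 then 1 else 0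

/-- The `k × (k+1)` matrix `G_k` with ones on the diagonal. -/
def Gmat (k : ℕ) : Matrix (Fin k) (Fin (k + 1)) ℂ :=
  Matrix.of fun i j => if (j : ℕ) = (i : ℕ) then 1 else 0

/-- The Kronecker block `E_k(μ) = J_k(μ) - λ I_k`. -/
def Eblk (k : ℕ) (μ : ℂ) : Pencil k k := (Jmat k μ, 1)

/-- The Kronecker block `E_k(∞) = I_k - λ J_k(0)`. -/
def EInfblk (k : ℕ) : Pencil k k := (1, Jmat k 0)

/-- The Kronecker block `L_k = F_k - λ G_k`. -/
def Lblk (k : ℕ) : Pencil k (k + 1) := (Fmat k, Gmat k)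

/-- The Kronecker block `L_kᵀ = F_kᵀ - λ G_kᵀ`. -/
def LTblk (k : ℕ) : Pencil (k + 1) k := ((Fmat k)ᵀ, (Gmat k)ᵀ)

/-- The skew-symmetric matrix `[[0, X], [-Xᵀ, 0]]`. -/
def skewPair {p q : ℕ} (X : Matrix (Fin p) (Fin q) ℂ) :
    Matrix (Fin (p + q)) (Fin (p + q)) ℂ :=
  (fromBlocks 0 X (-Xᵀ) 0).submatrix finSumFinEquiv.symm finSumFinEquiv.symm

/-- The skew-symmetric canonical block `H_h(μ)` (size `2h × 2h`). -/
def Hblk (h : ℕ) (μ : ℂ) : Pencil (h + h) (h + h) :=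
  (skewPair (Jmat h μ), skewPair (1 : Matrix (Fin h) (Fin h) ℂ))

/-- The skew-symmetric canonical block `K_k = H_k(∞)` (size `2k × 2k`). -/
def Kblk (k : ℕ) : Pencil (k + k) (k + k) :=
  (skewPair (1 : Matrix (Fin k) (Fin k) ℂ), skewPair (Jmat k 0))

/-- The skew-symmetric canonical block `M_m` (size `(2m+1) × (2m+1)`). -/
def Mblk (m : ℕ) : Pencil (m + (m + 1)) (m + (m + 1)) :=
  (skewPair (Fmat m), skewPair (Gmat m))


namespace PencilAux

abbrev Mn (k : ℕ) := Matrix (Fin k) (Fin k) ℂ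

lemma cong_refl {n : ℕ} (P : Pencil n n) : P.Congruent P :=
  ⟨1, isUnit_one, by simp, by simp⟩

lemma cong_trans {n : ℕ} {P Q R : Pencil n n} (h1 : P.Congruent Q) (h2 : Q.Congruent R) :
    P.Congruent R := by
  obtain ⟨S, hS, hS1, hS2⟩ := h1
  obtain ⟨T, hT, hT1, hT2⟩ := h2
  have key : ∀ A : Matrix (Fin n) (Fin n) ℂ,
      (S * T)ᵀ * A * (S * T) = Tᵀ * (Sᵀ * A * S) * T := by
    intro A; rw [transpose_mul]; noncomm_ring
  exact ⟨S * T, hS.mul hT, by rw [key, hS1, hT1], by rw [key, hS2, hT2]⟩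

lemma cong_symm {n : ℕ} {P Q : Pencil n n} (h : P.Congruent Q) : Q.Congruent P := by
  obtain ⟨S, hS, hS1, hS2⟩ := h
  have hdet : IsUnit S.det := (Matrix.isUnit_iff_isUnit_det S).mp hS
  have hSi : IsUnit S⁻¹ := Matrix.isUnit_nonsing_inv_iff.mpr hS
  have key : ∀ A : Mn n, (S⁻¹)ᵀ * (Sᵀ * A * S) * S⁻¹ = A := by
    intro A
    have h1 : S * S⁻¹ = 1 := Matrix.mul_nonsing_inv _ hdet
    calc (S⁻¹)ᵀ * (Sᵀ * A * S) * S⁻¹ = (S * S⁻¹)ᵀ * A * (S * S⁻¹) := by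
          rw [transpose_mul]; noncomm_ring
      _ = A := by rw [h1]; simp
  exact ⟨S⁻¹, hSi, by rw [← hS1, key], by rw [← hS2, key]⟩

end PencilAux

namespace PencilAux

lemma orbC_eq_of_cong {n : ℕ} {P Q : Pencil n n} (h : P.Congruent Q) :
    Pencil.orbC P = Pencil.orbC Q := by
  ext R
  exact ⟨fun hR => cong_trans (cong_symm h) hR, fun hR => cong_trans h hR⟩

lemma continuous_congMap {n : ℕ} (S : Mn n) :
    Continuous (fun X : Pencil n n => ((Sᵀ * X.1 * S, Sᵀ * X.2 * S) : Pencil n n)) := by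
  refine Continuous.prodMk ?_ ?_ <;>
  exact ((continuous_const.matrix_mul (by fun_prop)).matrix_mul continuous_const)

lemma orbC_subset_closure_of_mem {n : ℕ} {P Q : Pencil n n}
    (hQ : Q ∈ closure (Pencil.orbC P)) : Pencil.orbC Q ⊆ closure (Pencil.orbC P) := by
  rintro R ⟨S, hS, h1, h2⟩
  have hmap : Set.MapsTo (fun X : Pencil n n => ((Sᵀ * X.1 * S, Sᵀ * X.2 * S) : Pencil n n))
      (Pencil.orbC P) (Pencil.orbC P) := by
    intro X hX
    exact cong_trans hX ⟨S, hS, rfl, rfl⟩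
  have := map_mem_closure (continuous_congMap S) hQ hmap
  simpa [h1, h2] using this

lemma orbC_subset_closure_iff {n : ℕ} {P Q : Pencil n n} :
    Pencil.orbC Q ⊆ closure (Pencil.orbC P) ↔ Q ∈ closure (Pencil.orbC P) :=
  ⟨fun h => h (cong_refl Q), orbC_subset_closure_of_mem⟩

/-- Every nonempty open set of matrices contains an invertible matrix. -/
lemma exists_isUnit_of_isOpen {k : ℕ} {W : Set (Mn k)} (hW : IsOpen W) {U : Mn k}
    (hU : U ∈ W) : ∃ V, V ∈ W ∧ IsUnit V := by
  have hc : Continuous fun t : ℂ => U + t • (1 : Mn k) :=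
    continuous_const.add (continuous_id.smul continuous_const)
  have hmem : (fun t : ℂ => U + t • (1 : Mn k)) ⁻¹' W ∈ nhds (0 : ℂ) := by
    apply hc.continuousAt.preimage_mem_nhds
    simpa using hW.mem_nhds hU
  have hinf : Set.Infinite ((fun t : ℂ => U + t • (1 : Mn k)) ⁻¹' W) :=
    infinite_of_mem_nhds (0 : ℂ) hmem
  have hfin : (spectrum ℂ (-U)).Finite := Matrix.finite_spectrum (-U)
  obtain ⟨t, hts, htsp⟩ := (hinf.diff hfin).nonempty
  refine ⟨U + t • 1, hts, ?_⟩
  have := spectrum.notMem_iff.mp htsp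
  have halg : algebraMap ℂ (Mn k) t - (-U) = U + t • 1 := by
    rw [Algebra.algebraMap_eq_smul_one, sub_neg_eq_add, add_comm]
  rwa [halg] at this

lemma dense_isUnit {k : ℕ} : Dense {A : Mn k | IsUnit A} := by
  rw [dense_iff_inter_open]
  rintro W hW ⟨U, hU⟩
  obtain ⟨V, hVW, hV⟩ := exists_isUnit_of_isOpen hW hU
  exact ⟨V, hVW, hV⟩

end PencilAux

namespace PencilAux

variable {n : ℕ}

/-- Embedding an `n×n` matrix as the top-left block of an `(n+1)×(n+1)` matrix. -/
def emb (M : Mn n) : Mn (n + 1) :=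
  (fromBlocks M 0 0 (0 : Matrix (Fin 1) (Fin 1) ℂ)).submatrix
    finSumFinEquiv.symm finSumFinEquiv.symm

def embP (P : Pencil n n) : Pencil (n + 1) (n + 1) := (emb P.1, emb P.2)

/-- Top-left `n×n` block of an `(n+1)×(n+1)` matrix. -/
def upM (M : Mn (n + 1)) : Mn n :=
  M.submatrix (fun i : Fin n => finSumFinEquiv (Sum.inl i))
    (fun j : Fin n => finSumFinEquiv (Sum.inl j))

lemma upM_emb (M : Mn n) : upM (emb M) = M := by
  ext i j
  simp [upM, emb]

lemma submatrix_injective (X Y : Matrix (Fin n ⊕ Fin 1) (Fin n ⊕ Fin 1) ℂ)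
    (h : X.submatrix finSumFinEquiv.symm finSumFinEquiv.symm
       = Y.submatrix finSumFinEquiv.symm finSumFinEquiv.symm) : X = Y := by
  ext i j
  have := congrFun (congrFun h (finSumFinEquiv i)) (finSumFinEquiv j)
  simpa using this

lemma sandwich_eq (A : Mn n) (M : Matrix (Fin n ⊕ Fin 1) (Fin n ⊕ Fin 1) ℂ) :
    (M.submatrix finSumFinEquiv.symm finSumFinEquiv.symm)ᵀ * emb A *
      (M.submatrix finSumFinEquiv.symm finSumFinEquiv.symm)
    = (Mᵀ * fromBlocks A 0 0 0 * M).submatrix finSumFinEquiv.symm finSumFinEquiv.symm := by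
  rw [transpose_submatrix, emb]
  rw [submatrix_mul_equiv, submatrix_mul_equiv]

lemma upM_submatrix (X : Matrix (Fin n ⊕ Fin 1) (Fin n ⊕ Fin 1) ℂ) :
    upM (X.submatrix finSumFinEquiv.symm finSumFinEquiv.symm) = X.toBlocks₁₁ := by
  ext i j
  simp [upM, toBlocks₁₁]

/-- Key extraction: the top-left block of `Sᵀ * emb A * S` is `(upM S)ᵀ * A * upM S`. -/
lemma upM_sandwich (A : Mn n) (S : Mn (n + 1)) :
    upM (Sᵀ * emb A * S) = (upM S)ᵀ * A * upM S := by
  have hS : S = (S.submatrix (finSumFinEquiv : Fin n ⊕ Fin 1 ≃ Fin (n+1))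
      (finSumFinEquiv : Fin n ⊕ Fin 1 ≃ Fin (n+1))).submatrix
      finSumFinEquiv.symm finSumFinEquiv.symm := by
    simp [Matrix.submatrix_submatrix]
  set M : Matrix (Fin n ⊕ Fin 1) (Fin n ⊕ Fin 1) ℂ := S.submatrix finSumFinEquiv finSumFinEquiv
    with hM
  rw [hS, sandwich_eq, upM_submatrix]
  rcases fromBlocks_toBlocks M with hMb
  set U := M.toBlocks₁₁; set u := M.toBlocks₁₂; set w := M.toBlocks₂₁; set c := M.toBlocks₂₂
  have : Mᵀ * fromBlocks A 0 0 0 * M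
      = fromBlocks (Uᵀ * A * U) (Uᵀ * A * u) (uᵀ * A * U) (uᵀ * A * u) := by
    rw [← hMb, fromBlocks_transpose, fromBlocks_multiply, fromBlocks_multiply]
    congr 1 <;> simp [Matrix.mul_assoc]
  rw [this, toBlocks_fromBlocks₁₁, upM_submatrix]

end PencilAux

namespace PencilAux

variable {n : ℕ}

lemma det_smul_nonsing_inv {U : Mn n} (h : IsUnit U.det) : U.det • U⁻¹ = U.adjugate := by
  rw [Matrix.inv_def, smul_smul, Ring.mul_inverse_cancel _ h, one_smul]

lemma det_add_mul_eq (V : Mn n) (u : Matrix (Fin n) (Fin 1) ℂ) (Y : Matrix (Fin 1) (Fin n) ℂ) :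
    (V + u * Y).det = V.det + (Y * V.adjugate * u) 0 0 := by
  have hcont1 : Continuous fun V : Mn n => (V + u * Y).det :=
    (continuous_id.add continuous_const).matrix_det
  have hcont2 : Continuous fun V : Mn n => V.det + (Y * V.adjugate * u) 0 0 := by
    apply continuous_id.matrix_det.add
    exact (((continuous_const.matrix_mul continuous_id.matrix_adjugate).matrix_mul
      continuous_const).matrix_elem 0 0)
  have heq : Set.EqOn (fun V : Mn n => (V + u * Y).det)
      (fun V : Mn n => V.det + (Y * V.adjugate * u) 0 0) {A : Mn n | IsUnit A} := by
    intro V hV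
    have hdet : IsUnit V.det := (Matrix.isUnit_iff_isUnit_det V).mp hV
    have hinv : V * V⁻¹ = 1 := Matrix.mul_nonsing_inv _ hdet
    have hfact : V + u * Y = V * (1 + V⁻¹ * u * Y) := by
      rw [Matrix.mul_add, Matrix.mul_one]
      congr 1
      rw [← Matrix.mul_assoc, ← Matrix.mul_assoc, hinv, Matrix.one_mul]
    simp only
    rw [hfact, det_mul]
    have h2 : (1 + V⁻¹ * u * Y).det = (1 + Y * (V⁻¹ * u)).det :=
      Matrix.det_one_add_mul_comm (V⁻¹ * u) Y
    rw [h2, Matrix.det_fin_one]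
    have h3 : ((1 + Y * (V⁻¹ * u)) : Matrix (Fin 1) (Fin 1) ℂ) 0 0
        = 1 + (Y * V⁻¹ * u) 0 0 := by
      rw [Matrix.add_apply, Matrix.one_apply_eq, Matrix.mul_assoc]
    rw [h3, mul_add, mul_one]
    congr 1
    calc V.det * (Y * V⁻¹ * u) 0 0 = (Y * (V.det • V⁻¹) * u) 0 0 := by
          simp [Matrix.smul_mul, Matrix.mul_smul]
      _ = (Y * V.adjugate * u) 0 0 := by rw [det_smul_nonsing_inv hdet]
  exact congrFun (Continuous.ext_on dense_isUnit hcont1 hcont2 heq) V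

lemma det_fromBlocks_eq (V : Mn n) (u : Matrix (Fin n) (Fin 1) ℂ)
    (w : Matrix (Fin 1) (Fin n) ℂ) (c : Matrix (Fin 1) (Fin 1) ℂ) :
    (fromBlocks V u w c).det = c 0 0 * V.det - (w * V.adjugate * u) 0 0 := by
  have hcont1 : Continuous fun V : Mn n => (fromBlocks V u w c).det := by
    exact (((continuous_id.matrix_fromBlocks continuous_const continuous_const
      continuous_const)).matrix_det)
  have hcont2 : Continuous fun V : Mn n => c 0 0 * V.det - (w * V.adjugate * u) 0 0 := by
    apply (continuous_const.mul continuous_id.matrix_det).sub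
    exact (((continuous_const.matrix_mul continuous_id.matrix_adjugate).matrix_mul
      continuous_const).matrix_elem 0 0)
  have heq : Set.EqOn (fun V : Mn n => (fromBlocks V u w c).det)
      (fun V : Mn n => c 0 0 * V.det - (w * V.adjugate * u) 0 0) {A : Mn n | IsUnit A} := by
    intro V hV
    have hdet : IsUnit V.det := (Matrix.isUnit_iff_isUnit_det V).mp hV
    haveI : Invertible V := V.invertibleOfIsUnitDet hdet
    simp only
    rw [Matrix.det_fromBlocks₁₁, Matrix.det_fin_one]
    rw [Matrix.invOf_eq_nonsing_inv]
    have h3 : (c - w * V⁻¹ * u) 0 0 = c 0 0 - (w * V⁻¹ * u) 0 0 := rfl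
    rw [h3, mul_sub]
    congr 1
    · ring
    calc V.det * (w * V⁻¹ * u) 0 0 = (w * (V.det • V⁻¹) * u) 0 0 := by
          simp [Matrix.smul_mul, Matrix.mul_smul]
      _ = (w * V.adjugate * u) 0 0 := by rw [det_smul_nonsing_inv hdet]
  exact congrFun (Continuous.ext_on dense_isUnit hcont1 hcont2 heq) V

/-- If `[[U,u],[w,c]]` is invertible then `U + u*Y` is invertible for some `Y`. -/
lemma exists_isUnit_add_mul {U : Mn n} {u : Matrix (Fin n) (Fin 1) ℂ}
    {w : Matrix (Fin 1) (Fin n) ℂ} {c : Matrix (Fin 1) (Fin 1) ℂ}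
    (h : (fromBlocks U u w c).det ≠ 0) :
    ∃ Y : Matrix (Fin 1) (Fin n) ℂ, IsUnit (U + u * Y) := by
  by_contra hcon
  push_neg at hcon
  have hdet : ∀ Y : Matrix (Fin 1) (Fin n) ℂ, (U + u * Y).det = 0 := by
    intro Y
    have := hcon Y
    rw [Matrix.isUnit_iff_isUnit_det, isUnit_iff_ne_zero, not_not] at this
    exact this
  have hU0 : U.det = 0 := by simpa using hdet 0
  have hadj : U.adjugate * u = 0 := by
    ext i j
    have hj : j = 0 := Subsingleton.elim _ _
    subst hj
    have := hdet (Matrix.of fun _ k => if k = i then 1 else 0)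
    rw [det_add_mul_eq, hU0, zero_add] at this
    rw [Matrix.mul_assoc] at this
    have hexp : (Matrix.of (fun (_ : Fin 1) k => if k = i then (1:ℂ) else 0)
        * (U.adjugate * u)) 0 0 = (U.adjugate * u) i 0 := by
      rw [Matrix.mul_apply]
      rw [Finset.sum_eq_single i]
      · simp
      · intro b _ hb; simp [hb]
      · intro hi; exact absurd (Finset.mem_univ i) hi
    rw [← hexp]
    exact this
  rw [det_fromBlocks_eq, hU0, Matrix.mul_assoc, hadj, Matrix.mul_zero] at h
  exact h (by simp)

end PencilAux

namespace PencilAux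

variable {n : ℕ}

lemma det_eq_of_submatrix (M : Matrix (Fin n ⊕ Fin 1) (Fin n ⊕ Fin 1) ℂ) :
    (M.submatrix finSumFinEquiv.symm finSumFinEquiv.symm).det = M.det :=
  Matrix.det_submatrix_equiv_self _ _

lemma cong_embP_of_cong {P Q : Pencil n n} (h : P.Congruent Q) :
    (embP P).Congruent (embP Q) := by
  obtain ⟨S, hS, h1, h2⟩ := h
  set T₀ : Matrix (Fin n ⊕ Fin 1) (Fin n ⊕ Fin 1) ℂ := fromBlocks S 0 0 1 with hT₀
  refine ⟨T₀.submatrix finSumFinEquiv.symm finSumFinEquiv.symm, ?_, ?_, ?_⟩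
  · rw [Matrix.isUnit_iff_isUnit_det, det_eq_of_submatrix, hT₀,
      Matrix.det_fromBlocks_zero₂₁]
    simpa using (Matrix.isUnit_iff_isUnit_det S).mp hS
  · show _ * emb P.1 * _ = emb Q.1
    rw [sandwich_eq]
    rw [hT₀, fromBlocks_transpose, fromBlocks_multiply, fromBlocks_multiply]
    unfold emb
    congr 1
    simp [h1]
  · show _ * emb P.2 * _ = emb Q.2
    rw [sandwich_eq]
    rw [hT₀, fromBlocks_transpose, fromBlocks_multiply, fromBlocks_multiply]
    unfold emb
    congr 1
    simp [h2]

lemma cong_of_cong_embP {P Q : Pencil n n} (h : (embP P).Congruent (embP Q)) :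
    P.Congruent Q := by
  obtain ⟨S, hS, h1, h2⟩ := h
  set M : Matrix (Fin n ⊕ Fin 1) (Fin n ⊕ Fin 1) ℂ :=
    S.submatrix finSumFinEquiv finSumFinEquiv with hM
  have hSM : S = M.submatrix finSumFinEquiv.symm finSumFinEquiv.symm := by
    simp [hM, Matrix.submatrix_submatrix]
  have hMdet : M.det ≠ 0 := by
    have : IsUnit S.det := (Matrix.isUnit_iff_isUnit_det S).mp hS
    rw [hSM, det_eq_of_submatrix] at this
    exact this.ne_zero
  have hMdet' : (fromBlocks M.toBlocks₁₁ M.toBlocks₁₂ M.toBlocks₂₁ M.toBlocks₂₂).det ≠ 0 := by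
    rwa [fromBlocks_toBlocks]
  obtain ⟨Y, hY⟩ := exists_isUnit_add_mul hMdet'
  set T₀ : Matrix (Fin n ⊕ Fin 1) (Fin n ⊕ Fin 1) ℂ := fromBlocks 1 0 Y 1 with hT₀
  set T : Mn (n + 1) := T₀.submatrix finSumFinEquiv.symm finSumFinEquiv.symm with hT
  have hTunit : IsUnit T := by
    rw [Matrix.isUnit_iff_isUnit_det, hT, det_eq_of_submatrix, hT₀,
      Matrix.det_fromBlocks_zero₁₂]
    simp
  have hfix : ∀ A : Mn n, Tᵀ * emb A * T = emb A := by
    intro A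
    rw [hT, sandwich_eq, hT₀, fromBlocks_transpose, fromBlocks_multiply, fromBlocks_multiply]
    unfold emb
    congr 1
    simp
  set S' : Mn (n + 1) := S * T with hS'def
  have hkey : ∀ A A' : Mn n, Sᵀ * emb A * S = emb A' → S'ᵀ * emb A * S' = emb A' := by
    intro A A' hA
    have : S'ᵀ * emb A * S' = Tᵀ * (Sᵀ * emb A * S) * T := by
      rw [hS'def, transpose_mul]; noncomm_ring
    rw [this, hA, hfix]
  have hupS' : upM S' = M.toBlocks₁₁ + M.toBlocks₁₂ * Y := by
    have : S' = (M * T₀).submatrix finSumFinEquiv.symm finSumFinEquiv.symm := by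
      rw [hS'def, hT]
      conv_lhs => rw [hSM]
      rw [Matrix.submatrix_mul_equiv]
    rw [this, upM_submatrix]
    conv_lhs => rw [← fromBlocks_toBlocks M, hT₀, fromBlocks_multiply]
    rw [toBlocks_fromBlocks₁₁]
    simp
  have hUunit : IsUnit (upM S') := by rw [hupS']; exact hY
  refine ⟨upM S', hUunit, ?_, ?_⟩
  · have := congrArg upM (hkey P.1 Q.1 h1)
    rwa [upM_sandwich, upM_emb] at this
  · have := congrArg upM (hkey P.2 Q.2 h2)
    rwa [upM_sandwich, upM_emb] at this

end PencilAux

namespace PencilAux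

variable {n : ℕ}

lemma transpose_sandwich (A S : Mn n) : (Sᵀ * A * S)ᵀ = Sᵀ * Aᵀ * S := by
  rw [transpose_mul, transpose_mul, transpose_transpose, Matrix.mul_assoc]

lemma isSkew_of_cong {P Q : Pencil n n} (hP : P.IsSkew) (h : P.Congruent Q) : Q.IsSkew := by
  obtain ⟨S, hS, h1, h2⟩ := h
  constructor
  · rw [← h1, transpose_sandwich, hP.1]; simp
  · rw [← h2, transpose_sandwich, hP.2]; simp

lemma emb_transpose (A : Mn n) : (emb A)ᵀ = emb Aᵀ := by
  unfold emb
  rw [transpose_submatrix, fromBlocks_transpose]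
  simp

lemma emb_neg (A : Mn n) : emb (-A) = -emb A := by
  unfold emb
  have h : fromBlocks (-A) (0 : Matrix (Fin n) (Fin 1) ℂ) (0 : Matrix (Fin 1) (Fin n) ℂ)
      (0 : Matrix (Fin 1) (Fin 1) ℂ) = -fromBlocks A 0 0 0 := by
    rw [Matrix.fromBlocks_neg]; simp
  rw [h]
  ext i j
  simp

lemma isSkew_embP {P : Pencil n n} (hP : P.IsSkew) : (embP P).IsSkew := by
  constructor
  · show (emb P.1)ᵀ = -emb P.1
    rw [emb_transpose, hP.1, emb_neg]
  · show (emb P.2)ᵀ = -emb P.2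
    rw [emb_transpose, hP.2, emb_neg]

lemma upM_transpose (X : Mn (n + 1)) : (upM X)ᵀ = upM Xᵀ := rfl

lemma upM_neg (X : Mn (n + 1)) : upM (-X) = -upM X := rfl

/-- `Mblk 0` is the 1×1 zero pencil, so `dsum P (Mblk 0)` is just `embP P`. -/
lemma skewPair_zero (X : Matrix (Fin 0) (Fin 1) ℂ) : skewPair X = 0 := by
  ext i j
  unfold skewPair
  rw [Matrix.submatrix_apply]
  rcases h1 : finSumFinEquiv.symm i with a | a
  · exact a.elim0
  rcases h2 : finSumFinEquiv.symm j with b | b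
  · exact b.elim0
  simp

lemma dsum_M0_eq (P : Pencil n n) : Pencil.dsum P (Mblk 0) = embP P := by
  unfold Pencil.dsum embP emb Mblk
  rw [skewPair_zero, skewPair_zero]

lemma continuous_embP : Continuous (fun P : Pencil n n => embP P) := by
  unfold embP emb
  exact Continuous.prodMk
    ((continuous_fst.matrix_fromBlocks continuous_const continuous_const
      continuous_const).matrix_submatrix _ _)
    ((continuous_snd.matrix_fromBlocks continuous_const continuous_const
      continuous_const).matrix_submatrix _ _)

lemma continuous_upMP : Continuous (fun X : Pencil (n + 1) (n + 1) => ((upM X.1, upM X.2) : Pencil n n)) := by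
  unfold upM
  exact Continuous.prodMk (continuous_fst.matrix_submatrix _ _)
    (continuous_snd.matrix_submatrix _ _)

lemma upMP_embP (P : Pencil n n) : ((upM (embP P).1, upM (embP P).2) : Pencil n n) = P := by
  show ((upM (emb P.1), upM (emb P.2)) : Pencil n n) = P
  rw [upM_emb, upM_emb]

/-- Forward transfer of orbit-closure inclusion under `embP`. -/
lemma closure_transfer_fwd {P1 P2 : Pencil n n}
    (h : Pencil.orbC P2 ⊆ closure (Pencil.orbC P1)) :
    Pencil.orbC (embP P2) ⊆ closure (Pencil.orbC (embP P1)) := by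
  rw [orbC_subset_closure_iff] at h ⊢
  have hmap : Set.MapsTo (fun P : Pencil n n => embP P)
      (Pencil.orbC P1) (Pencil.orbC (embP P1)) := fun X hX => cong_embP_of_cong hX
  exact map_mem_closure continuous_embP h hmap

/-- Backward transfer of orbit-closure inclusion under `embP`. -/
lemma closure_transfer_bwd {P1 P2 : Pencil n n}
    (h : Pencil.orbC (embP P2) ⊆ closure (Pencil.orbC (embP P1))) :
    Pencil.orbC P2 ⊆ closure (Pencil.orbC P1) := by
  rw [orbC_subset_closure_iff] at h ⊢
  rw [mem_closure_iff] at h ⊢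
  intro O hO hP2O
  set π := fun X : Pencil (n + 1) (n + 1) => ((upM X.1, upM X.2) : Pencil n n) with hπ
  have hOpre : IsOpen (π ⁻¹' O) := hO.preimage continuous_upMP
  have hmem : embP P2 ∈ π ⁻¹' O := by
    show π (embP P2) ∈ O
    rw [hπ]; simpa [upMP_embP] using hP2O
  obtain ⟨X, hXO, hXorb⟩ := h _ hOpre hmem
  obtain ⟨S, hS, h1, h2⟩ := hXorb
  set g := fun V : Mn n => ((Vᵀ * P1.1 * V, Vᵀ * P1.2 * V) : Pencil n n) with hg
  have hgc : Continuous g := by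
    refine Continuous.prodMk ?_ ?_ <;>
      exact (continuous_id.matrix_transpose.matrix_mul continuous_const).matrix_mul continuous_id
  have hgU : g (upM S) ∈ O := by
    have : π X = g (upM S) := by
      have e1 : X.1 = Sᵀ * emb P1.1 * S := h1.symm
      have e2 : X.2 = Sᵀ * emb P1.2 * S := h2.symm
      show (upM X.1, upM X.2) = ((upM S)ᵀ * P1.1 * upM S, (upM S)ᵀ * P1.2 * upM S)
      rw [e1, e2, upM_sandwich, upM_sandwich]
    rw [← this]
    exact hXO
  obtain ⟨V, hVmem, hVunit⟩ := exists_isUnit_of_isOpen (hO.preimage hgc) hgU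
  exact ⟨g V, hVmem, ⟨V, hVunit, rfl, rfl⟩⟩

end PencilAux

namespace PencilAux

variable {n : ℕ}

lemma finSumFinEquiv_inr_zero : finSumFinEquiv (Sum.inr (0 : Fin 1)) = Fin.last n := by
  rw [finSumFinEquiv_apply_right]
  ext
  simp

lemma emb_upM_of_zero (X : Mn (n + 1)) (hc : ∀ j, X j (Fin.last n) = 0)
    (hr : ∀ j, X (Fin.last n) j = 0) : emb (upM X) = X := by
  ext i j
  unfold emb
  rw [Matrix.submatrix_apply]
  rcases h1 : finSumFinEquiv.symm i with a | a
  · have hi : i = finSumFinEquiv (Sum.inl a) := by rw [← h1]; simp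
    rcases h2 : finSumFinEquiv.symm j with b | b
    · have hj : j = finSumFinEquiv (Sum.inl b) := by rw [← h2]; simp
      show upM X a b = X i j
      rw [hi, hj]
      rfl
    · have hb : b = 0 := Subsingleton.elim _ _
      have hj : j = Fin.last n := by
        rw [← finSumFinEquiv_inr_zero (n := n), ← hb, ← h2]; simp
      show (0 : Matrix (Fin n) (Fin 1) ℂ) a b = X i j
      rw [hj, hc i]
      rfl
  · have ha : a = 0 := Subsingleton.elim _ _
    have hi : i = Fin.last n := by
      rw [← finSumFinEquiv_inr_zero (n := n), ← ha, ← h1]; simp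
    rcases h2 : finSumFinEquiv.symm j with b | b <;>
      [show (0 : Matrix (Fin 1) (Fin n) ℂ) a b = X i j;
       show (0 : Matrix (Fin 1) (Fin 1) ℂ) a b = X i j] <;>
      rw [hi, hr j] <;> rfl

lemma exists_split {R : Pencil (n + 1) (n + 1)} (hskew : R.IsSkew) {v : Fin (n + 1) → ℂ}
    (hv : v ≠ 0) (hv1 : R.1 *ᵥ v = 0) (hv2 : R.2 *ᵥ v = 0) :
    ∃ R' : Pencil n n, R'.IsSkew ∧ (embP R').Congruent R := by
  obtain ⟨i, hi⟩ := Function.ne_iff.mp hv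
  set σ : Equiv.Perm (Fin (n + 1)) := Equiv.swap i (Fin.last n) with hσ
  set S₀ : Mn (n + 1) := (1 : Mn (n + 1)).updateCol i v with hS₀
  set S : Mn (n + 1) := S₀.submatrix id σ with hSdef
  have hScol : ∀ j, S j (Fin.last n) = v j := by
    intro j
    rw [hSdef, Matrix.submatrix_apply]
    have : σ (Fin.last n) = i := Equiv.swap_apply_right _ _
    rw [this]
    simp [hS₀, Matrix.updateCol_self]
  have hSdet : IsUnit S.det := by
    rw [hSdef, Matrix.det_permute' σ S₀]
    have hdS₀ : S₀.det = v i := by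
      rw [hS₀, ← Matrix.cramer_apply, Matrix.cramer_one]
      rfl
    rw [hdS₀, isUnit_iff_ne_zero]
    apply mul_ne_zero _ (by simpa using hi)
    rcases Int.units_eq_one_or (Equiv.Perm.sign σ) with h | h <;> simp [h]
  have hSunit : IsUnit S := (Matrix.isUnit_iff_isUnit_det S).mpr hSdet
  -- the congruence transform of R by S
  have hcol : ∀ (A : Mn (n + 1)), A *ᵥ v = 0 → ∀ j, (Sᵀ * A * S) j (Fin.last n) = 0 := by
    intro A hA j
    have : (Sᵀ * A * S) j (Fin.last n) = ((Sᵀ * A) *ᵥ v) j := by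
      rw [Matrix.mul_apply, Matrix.mulVec]
      apply Finset.sum_congr rfl
      intro k _
      rw [hScol k]
    rw [this, ← Matrix.mulVec_mulVec, hA, Matrix.mulVec_zero]
    simp
  set T1 := Sᵀ * R.1 * S with hT1
  set T2 := Sᵀ * R.2 * S with hT2
  have hsk1 : T1ᵀ = -T1 := by rw [hT1, transpose_sandwich, hskew.1]; simp
  have hsk2 : T2ᵀ = -T2 := by rw [hT2, transpose_sandwich, hskew.2]; simp
  have hc1 : ∀ j, T1 j (Fin.last n) = 0 := hcol R.1 hv1
  have hc2 : ∀ j, T2 j (Fin.last n) = 0 := hcol R.2 hv2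
  have hr1 : ∀ j, T1 (Fin.last n) j = 0 := by
    intro j
    have : T1 (Fin.last n) j = T1ᵀ j (Fin.last n) := rfl
    rw [this, hsk1]
    simp [hc1 j]
  have hr2 : ∀ j, T2 (Fin.last n) j = 0 := by
    intro j
    have : T2 (Fin.last n) j = T2ᵀ j (Fin.last n) := rfl
    rw [this, hsk2]
    simp [hc2 j]
  refine ⟨(upM T1, upM T2), ⟨?_, ?_⟩, ?_⟩
  · show (upM T1)ᵀ = -upM T1
    rw [upM_transpose, hsk1, upM_neg]
  · show (upM T2)ᵀ = -upM T2
    rw [upM_transpose, hsk2, upM_neg]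
  · apply cong_symm
    refine ⟨S, hSunit, ?_, ?_⟩
    · show Sᵀ * R.1 * S = emb (upM T1)
      rw [emb_upM_of_zero T1 hc1 hr1, hT1]
    · show Sᵀ * R.2 * S = emb (upM T2)
      rw [emb_upM_of_zero T2 hc2 hr2, hT2]

/-- The (closed) set of pencils whose two coefficients have a common kernel vector. -/
def Ker1 (n : ℕ) : Set (Pencil (n + 1) (n + 1)) :=
  {X | ∃ v : Fin (n + 1) → ℂ, v ≠ 0 ∧ X.1 *ᵥ v = 0 ∧ X.2 *ᵥ v = 0}

lemma isClosed_Ker1 : IsClosed (Ker1 n) := by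
  set sph := Metric.sphere (0 : Fin (n + 1) → ℂ) 1 with hsph
  set C : Set (↥sph × Pencil (n + 1) (n + 1)) :=
    {p | p.2.1 *ᵥ (p.1 : Fin (n + 1) → ℂ) = 0 ∧ p.2.2 *ᵥ (p.1 : Fin (n + 1) → ℂ) = 0} with hC
  have hCclosed : IsClosed C := by
    apply IsClosed.inter
    · exact isClosed_eq ((continuous_fst.comp continuous_snd).matrix_mulVec
        (continuous_subtype_val.comp continuous_fst)) continuous_const
    · exact isClosed_eq ((continuous_snd.comp continuous_snd).matrix_mulVec
        (continuous_subtype_val.comp continuous_fst)) continuous_const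
  have himg : Ker1 n = Prod.snd '' C := by
    ext X
    constructor
    · rintro ⟨v, hv0, h1, h2⟩
      have hnorm : ‖v‖ ≠ 0 := by simpa using hv0
      set u := ‖v‖⁻¹ • v with hu
      have husph : u ∈ sph := by
        rw [hsph, mem_sphere_zero_iff_norm, hu, norm_smul]
        simp [norm_inv]
        field_simp
      refine ⟨(⟨u, husph⟩, X), ⟨?_, ?_⟩, rfl⟩
      · show X.1 *ᵥ u = 0
        rw [hu, Matrix.mulVec_smul, h1, smul_zero]
      · show X.2 *ᵥ u = 0
        rw [hu, Matrix.mulVec_smul, h2, smul_zero]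
    · rintro ⟨⟨⟨v, hvs⟩, X'⟩, ⟨h1, h2⟩, rfl⟩
      refine ⟨v, ?_, h1, h2⟩
      rw [hsph, mem_sphere_zero_iff_norm] at hvs
      intro h0
      rw [h0] at hvs
      simp at hvs
  rw [himg]
  exact isClosedMap_snd_of_compactSpace C hCclosed

lemma orbC_embP_subset_Ker1 (P : Pencil n n) : Pencil.orbC (embP P) ⊆ Ker1 n := by
  rintro X ⟨S, hS, h1, h2⟩
  have hdet : IsUnit S.det := (Matrix.isUnit_iff_isUnit_det S).mp hS
  set elast : Fin (n + 1) → ℂ := Pi.single (Fin.last n) 1 with helast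
  have hemb : ∀ A : Mn n, emb A *ᵥ elast = 0 := by
    intro A
    rw [helast, Matrix.mulVec_single]
    funext i
    show emb A i (Fin.last n) * 1 = 0
    rw [mul_one]
    unfold emb
    rw [Matrix.submatrix_apply]
    have : finSumFinEquiv.symm (Fin.last n) = Sum.inr (0 : Fin 1) := by
      rw [Equiv.symm_apply_eq, finSumFinEquiv_inr_zero]
    rw [this]
    rcases h : finSumFinEquiv.symm i with a | a <;> simp
  set v := S⁻¹ *ᵥ elast with hv
  have hkill : ∀ A : Mn n, (Sᵀ * emb A * S) *ᵥ v = 0 := by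
    intro A
    rw [hv, Matrix.mulVec_mulVec]
    have : Sᵀ * emb A * S * S⁻¹ = Sᵀ * emb A := by
      rw [Matrix.mul_assoc, Matrix.mul_nonsing_inv _ hdet, Matrix.mul_one]
    rw [this, ← Matrix.mulVec_mulVec, hemb, Matrix.mulVec_zero]
  have hvne : v ≠ 0 := by
    intro h0
    have hSv : S *ᵥ v = elast := by
      rw [hv, Matrix.mulVec_mulVec, Matrix.mul_nonsing_inv _ hdet, Matrix.one_mulVec]
    rw [h0, Matrix.mulVec_zero] at hSv
    have := congrFun hSv (Fin.last n)
    rw [helast] at this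
    simp at this
  exact ⟨v, hvne, by rw [← h1]; exact hkill P.1, by rw [← h2]; exact hkill P.2⟩

end PencilAux

/-- **Theorem 4.1**: let `Q1`, `Q2` be the `(n+1) × (n+1)` skew-symmetric
pencils congruent to `P1 ⊕ M_0` and `P2 ⊕ M_0` respectively. Then `orbᶜ P1`
covers `orbᶜ P2` if and only if `orbᶜ Q1` covers `orbᶜ Q2`. -/
theorem coversC_dsum_M0 {n : ℕ} (P1 P2 : Pencil n n)
    (h1 : Pencil.IsSkew P1) (h2 : Pencil.IsSkew P2)
    (Q1 Q2 : Pencil (n + 1) (n + 1))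
    (hQ1 : Pencil.Congruent (Pencil.dsum P1 (Mblk 0)) Q1)
    (hQ2 : Pencil.Congruent (Pencil.dsum P2 (Mblk 0)) Q2) :
    Pencil.CoversC P1 P2 ↔ Pencil.CoversC Q1 Q2 := by
  have hd1 : (PencilAux.embP P1).Congruent Q1 := by
    have h := hQ1; rwa [PencilAux.dsum_M0_eq] at h
  have hd2 : (PencilAux.embP P2).Congruent Q2 := by
    have h := hQ2; rwa [PencilAux.dsum_M0_eq] at h
  have horb1 : Pencil.orbC Q1 = Pencil.orbC (PencilAux.embP P1) :=
    (PencilAux.orbC_eq_of_cong hd1).symm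
  have horb2 : Pencil.orbC Q2 = Pencil.orbC (PencilAux.embP P2) :=
    (PencilAux.orbC_eq_of_cong hd2).symm
  constructor
  · rintro ⟨hc, hsub, hno⟩
    refine ⟨?_, ?_, ?_⟩
    · intro hQQ
      exact hc (PencilAux.cong_of_cong_embP
        (PencilAux.cong_trans hd1 (PencilAux.cong_trans hQQ (PencilAux.cong_symm hd2))))
    · rw [horb1, horb2]
      exact PencilAux.closure_transfer_fwd hsub
    · rintro ⟨R, hRskew, hR1, hR2, hRsub1, hRsub2⟩
      rw [horb1] at hRsub1
      rw [horb2] at hRsub2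
      have hRK : R ∈ PencilAux.Ker1 n := by
        have hcl : closure (Pencil.orbC (PencilAux.embP P1)) ⊆ PencilAux.Ker1 n :=
          closure_minimal (PencilAux.orbC_embP_subset_Ker1 P1) PencilAux.isClosed_Ker1
        exact hcl (hRsub1 (PencilAux.cong_refl R))
      obtain ⟨v, hv0, hvk1, hvk2⟩ := hRK
      obtain ⟨R', hR'skew, hR'cong⟩ := PencilAux.exists_split hRskew hv0 hvk1 hvk2
      have horbR : Pencil.orbC (PencilAux.embP R') = Pencil.orbC R :=
        PencilAux.orbC_eq_of_cong hR'cong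
      apply hno
      refine ⟨R', hR'skew, ?_, ?_, ?_, ?_⟩
      · intro hcc
        exact hR1 (PencilAux.cong_trans (PencilAux.cong_symm hR'cong)
          (PencilAux.cong_trans (PencilAux.cong_embP_of_cong hcc) hd1))
      · intro hcc
        exact hR2 (PencilAux.cong_trans (PencilAux.cong_symm hR'cong)
          (PencilAux.cong_trans (PencilAux.cong_embP_of_cong hcc) hd2))
      · apply PencilAux.closure_transfer_bwd
        rw [horbR]
        exact hRsub1
      · apply PencilAux.closure_transfer_bwd
        rw [horbR]
        exact hRsub2
  · rintro ⟨hc, hsub, hno⟩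
    refine ⟨?_, ?_, ?_⟩
    · intro hPP
      exact hc (PencilAux.cong_trans (PencilAux.cong_symm hd1)
        (PencilAux.cong_trans (PencilAux.cong_embP_of_cong hPP) hd2))
    · apply PencilAux.closure_transfer_bwd
      rw [← horb1, ← horb2]
      exact hsub
    · rintro ⟨R, hRskew, hR1, hR2, hRsub1, hRsub2⟩
      apply hno
      refine ⟨PencilAux.embP R, PencilAux.isSkew_embP hRskew, ?_, ?_, ?_, ?_⟩
      · intro hcc
        exact hR1 (PencilAux.cong_of_cong_embP
          (PencilAux.cong_trans hcc (PencilAux.cong_symm hd1)))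
      · intro hcc
        exact hR2 (PencilAux.cong_of_cong_embP
          (PencilAux.cong_trans hcc (PencilAux.cong_symm hd2)))
      · rw [horb1]
        exact PencilAux.closure_transfer_fwd hRsub1
      · rw [horb2]
        exact PencilAux.closure_transfer_fwd hRsub2
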